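/- Let K be a compact Hausdorff space, φ : K → K a continuous map, λ ∈ ℂ \ {0}, w ∈ C(K), T = w·T_φ, and k₀ ∈ K a φ-periodic point of period p with w_p(k₀) = λ^p. Then the discrete measure μ = Σ_{i=0}^{p-1} λ^{p-i-1} (T')^i δ_{k₀} is a nonzero element of C(K)' satisfying T'μ = λμ, i.e., λ is an eigenvalue of the adjoint T'. -/
import Mathlib


/-- If `k₀` is a `φ`-periodic point of period `p` with `w_p(k₀) = λ^p`
(`λ ≠ 0`), then `μ = Σ_{i=0}^{p-1} λ^{p-i-1} (T')^i δ_{k₀}` is a nonzero continuous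
functional on `C(K)` with `T'μ = λμ`, i.e. `λ` is an eigenvalue of the adjoint of
the weighted composition operator `T = w·T_φ`. -/
theorem stmt10 {K : Type*} [TopologicalSpace K] [CompactSpace K] [T2Space K]
    (φ : K → K) (hφc : Continuous φ)
    (w : C(K, ℂ)) (lam : ℂ) (hlam : lam ≠ 0)
    (T : C(K, ℂ) →L[ℂ] C(K, ℂ))
    (hT : ∀ (f : C(K, ℂ)) (k : K), T f k = w k * f (φ k))
    (k₀ : K) (p : ℕ) (hp : 0 < p) (hper : φ^[p] k₀ = k₀)
    (hmin : ∀ m : ℕ, 0 < m → m < p → φ^[m] k₀ ≠ k₀)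
    (hwp : ∏ i ∈ Finset.range p, w (φ^[i] k₀) = lam ^ p) :
    (∑ i ∈ Finset.range p,
        (lam ^ (p - i - 1)) • ((ContinuousMap.evalCLM ℂ k₀).comp (T ^ i))) ≠ 0 ∧
    (∑ i ∈ Finset.range p,
        (lam ^ (p - i - 1)) • ((ContinuousMap.evalCLM ℂ k₀).comp (T ^ i))).comp T =
      lam • ∑ i ∈ Finset.range p,
        (lam ^ (p - i - 1)) • ((ContinuousMap.evalCLM ℂ k₀).comp (T ^ i)) := by
  classical
  have hTiter : ∀ (i : ℕ) (f : C(K, ℂ)) (k : K),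
      (T ^ i) f k = (∏ j ∈ Finset.range i, w (φ^[j] k)) * f (φ^[i] k) := by
    intro i
    induction i with
    | zero => intro f k; simp
    | succ n ih =>
      intro f k
      rw [pow_succ]
      simp only [ContinuousLinearMap.mul_apply]
      rw [ih (T f) k, hT, Finset.prod_range_succ, Function.iterate_succ_apply']
      ring
  have happ : ∀ f : C(K, ℂ),
      (∑ i ∈ Finset.range p,
        (lam ^ (p - i - 1)) • ((ContinuousMap.evalCLM ℂ k₀).comp (T ^ i))) f
      = ∑ i ∈ Finset.range p, lam ^ (p - i - 1) * ((T ^ i) f k₀) := by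
    intro f
    simp [ContinuousLinearMap.sum_apply, ContinuousMap.evalCLM]
  constructor
  · -- nonzero
    intro h
    -- build test function: 1 at k₀, 0 at φ^[i] k₀ for 0 < i < p
    set S : Finset K := Finset.image (fun i => φ^[i] k₀) (Finset.Ioo 0 p) with hS
    have hdisj : Disjoint (S : Set K) ({k₀} : Set K) := by
      rw [Set.disjoint_singleton_right]
      simp only [hS, Finset.coe_image, Set.mem_image, Finset.mem_coe, Finset.mem_Ioo]
      rintro ⟨i, ⟨hi0, hip⟩, hik⟩
      exact hmin i hi0 hip hik
    obtain ⟨g, hg0, hg1, -⟩ := exists_continuous_zero_one_of_isClosed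
      (S.finite_toSet.isClosed) (isClosed_singleton (x := k₀)) hdisj
    set f : C(K, ℂ) := (⟨Complex.ofReal, Complex.continuous_ofReal⟩ : C(ℝ, ℂ)).comp g with hf
    have hfk₀ : f k₀ = 1 := by
      have := hg1 (Set.mem_singleton k₀)
      simp [hf, this]
    have hfS : ∀ i, 0 < i → i < p → f (φ^[i] k₀) = 0 := by
      intro i hi0 hip
      have hm : φ^[i] k₀ ∈ (S : Set K) := by
        simp only [hS, Finset.coe_image, Set.mem_image, Finset.mem_coe, Finset.mem_Ioo]
        exact ⟨i, ⟨hi0, hip⟩, rfl⟩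
      have := hg0 hm
      simp only [hf, ContinuousMap.comp_apply, ContinuousMap.coe_mk]
      rw [this]; simp
    have hzero : (∑ i ∈ Finset.range p,
        (lam ^ (p - i - 1)) • ((ContinuousMap.evalCLM ℂ k₀).comp (T ^ i))) f = 0 := by
      rw [h]; rfl
    rw [happ] at hzero
    rw [Finset.sum_eq_single 0] at hzero
    · simp only [pow_zero, Function.iterate_zero, id_eq, ContinuousLinearMap.one_apply,
        Nat.sub_zero, hfk₀, mul_one] at hzero
      exact pow_ne_zero _ hlam hzero
    · intro i hi hi0
      have hi0' : 0 < i := Nat.pos_of_ne_zero hi0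
      have hip : i < p := Finset.mem_range.mp hi
      rw [hTiter, hfS i hi0' hip]
      ring
    · intro h0
      exact absurd (Finset.mem_range.mpr hp) h0
  · -- eigen equation
    ext f
    have hEp : (T ^ p) f k₀ = lam ^ p * f k₀ := by
      rw [hTiter, hper, hwp]
    have hL : ((∑ i ∈ Finset.range p,
        (lam ^ (p - i - 1)) • ((ContinuousMap.evalCLM ℂ k₀).comp (T ^ i))).comp T) f
        = ∑ i ∈ Finset.range p, lam ^ (p - i - 1) * ((T ^ (i + 1)) f k₀) := by
      rw [ContinuousLinearMap.comp_apply, happ]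
      refine Finset.sum_congr rfl fun i _ => ?_
      rw [pow_succ]
      rfl
    rw [hL]
    have hR : (lam • ∑ i ∈ Finset.range p,
        (lam ^ (p - i - 1)) • ((ContinuousMap.evalCLM ℂ k₀).comp (T ^ i))) f
        = ∑ i ∈ Finset.range p, lam ^ (p - i) * ((T ^ i) f k₀) := by
      rw [ContinuousLinearMap.smul_apply, happ, smul_eq_mul, Finset.mul_sum]
      refine Finset.sum_congr rfl fun i hi => ?_
      have hip : i < p := Finset.mem_range.mp hi
      rw [← mul_assoc, ← pow_succ']
      congr 2
      omega
    rw [hR]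
    -- shift the index
    have key : ∑ i ∈ Finset.range p, lam ^ (p - i - 1) * ((T ^ (i + 1)) f) k₀
        = ∑ i ∈ Finset.range p, lam ^ (p - i) * ((T ^ i) f) k₀ := by
      have h1 := Finset.sum_range_succ' (fun i => lam ^ (p - i) * ((T ^ i) f) k₀) p
      have h2 := Finset.sum_range_succ (fun i => lam ^ (p - i) * ((T ^ i) f) k₀) p
      simp only [Nat.sub_self, pow_zero, one_mul, Nat.sub_zero, pow_one,
        ContinuousLinearMap.one_apply, hEp] at h1 h2
      have h3 : ∑ k ∈ Finset.range p, lam ^ (p - (k + 1)) * ((T ^ (k + 1)) f) k₀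
          = ∑ i ∈ Finset.range p, lam ^ (p - i - 1) * ((T ^ (i + 1)) f) k₀ :=
        Finset.sum_congr rfl fun i _ => by rw [Nat.sub_sub]
      rw [h3] at h1
      linear_combination h2 - h1
    exact key
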